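/- arXiv:2012.04569 — 3 statements merged into one kernel-verified Lean document; each statement's English description precedes it below -/
import Mathlib

section
/- Assume that for every real number t ≥ 3275 there is a prime number in the interval [t, t + t/(2 (ln t)^2)]. Then for every real number t ≥ 3275^2 there is a prime number q such that q^2 lies in the interval [t, t + 7t/(ln t)^2]. -/
/-- Assuming Dusart's theorem (for every real `t ≥ 3275` there is a prime in
`[t, t + t/(2 ln² t)]`), for every real `t ≥ 3275²` there is a prime `q` with
`q²` in `[t, t + 7t/(ln t)²]`. -/
theorem stmt_7
    (hDusart : ∀ t : ℝ, 3275 ≤ t →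
      ∃ p : ℕ, p.Prime ∧ t ≤ p ∧ (p : ℝ) ≤ t + t / (2 * Real.log t ^ 2)) :
    ∀ t : ℝ, (3275 : ℝ) ^ 2 ≤ t →
      ∃ q : ℕ, q.Prime ∧ t ≤ (q : ℝ) ^ 2 ∧ (q : ℝ) ^ 2 ≤ t + 7 * t / Real.log t ^ 2 := by
  intro t ht
  have ht0 : (0:ℝ) < t := by nlinarith
  set s := Real.sqrt t with hs
  have hs0 : 0 < s := Real.sqrt_pos.mpr ht0
  have hst : s ^ 2 = t := Real.sq_sqrt ht0.le
  have hs3275 : (3275:ℝ) ≤ s := by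
    have h := Real.sqrt_le_sqrt ht
    rwa [Real.sqrt_sq (by norm_num : (0:ℝ) ≤ 3275)] at h
  obtain ⟨p, hp, hsp, hps⟩ := hDusart s hs3275
  refine ⟨p, hp, ?_, ?_⟩
  · nlinarith
  · have hlogs : Real.log s = Real.log t / 2 := by
      rw [hs, Real.log_sqrt ht0.le]
    set L := Real.log t with hLdef
    have hL : (2:ℝ) ≤ L := by
      rw [hLdef, Real.le_log_iff_exp_le ht0]
      have h1 : Real.exp 1 < 2.7182818286 := Real.exp_one_lt_d9
      have h2 : Real.exp 2 = Real.exp 1 * Real.exp 1 := by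
        rw [← Real.exp_add]; norm_num
      nlinarith [Real.exp_pos 1]
    have hL0 : (0:ℝ) < L := by linarith
    have hL2 : (0:ℝ) < L ^ 2 := by positivity
    have hps' : (p:ℝ) ≤ s * (1 + 2 / L ^ 2) := by
      rw [hlogs] at hps
      have e : s + s / (2 * (L / 2) ^ 2) = s * (1 + 2 / L ^ 2) := by
        field_simp
      linarith [e ▸ hps]
    have hp0 : (0:ℝ) ≤ s * (1 + 2 / L ^ 2) := by positivity
    have key : (p:ℝ) ^ 2 ≤ s ^ 2 * (1 + 2 / L ^ 2) ^ 2 := by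
      nlinarith [(Nat.cast_nonneg p : (0:ℝ) ≤ p)]
    set u := 1 / L ^ 2 with hu
    have hu0 : 0 < u := by positivity
    have hu4 : u ≤ 1 / 4 := by
      rw [hu, div_le_div_iff₀ hL2 (by norm_num)]
      nlinarith
    have huL : u * L ^ 2 = 1 := by
      rw [hu]; field_simp
    have hfinal : s ^ 2 * (1 + 2 * u) ^ 2 ≤ t + 7 * t / L ^ 2 := by
      have h7 : 7 * t / L ^ 2 = 7 * t * u := by
        rw [hu]; ring
      rw [h7, hst]
      nlinarith [mul_nonneg ht0.le (mul_nonneg hu0.le (by linarith : (0:ℝ) ≤ 1 - 4*u)), mul_pos ht0 hu0]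
    calc (p:ℝ) ^ 2 ≤ s ^ 2 * (1 + 2 * u) ^ 2 := by
            rw [hu]; convert key using 3; ring
      _ ≤ t + 7 * t / L ^ 2 := hfinal
end

section
/- Let k ≥ 3 be odd and let G be a finite k-regular simple graph with girth at least 5 whose edge set is partitioned into a family 𝒯 of trees, each of diameter at most 3, such that every vertex belongs to at most (k+1)/2 trees of 𝒯. Then G contains a perfect matching. -/
section AuxTree

variable {W : Type*} [DecidableEq W] {H : SimpleGraph W}

lemma aux_offpath (ht : H.IsTree) {u v : W} (p : H.Walk u v) (hp : p.IsPath)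
    (hlen : p.length ≠ 0) {a b : W} (hab : a ≠ b) (ha : H.Adj u a) (hb : H.Adj u b) :
    ∃ n, H.Adj u n ∧ n ∉ p.support := by
  cases p with
  | nil => simp at hlen
  | @cons _ c _ h q =>
    obtain ⟨n, hn, hnc⟩ : ∃ n, H.Adj u n ∧ n ≠ c := by
      rcases eq_or_ne a c with rfl | hac
      · exact ⟨b, hb, fun hbc => hab hbc.symm⟩
      · exact ⟨a, ha, hac⟩
    refine ⟨n, hn, fun hmem => ?_⟩
    rw [SimpleGraph.Walk.support_cons] at hmem
    have hnu : n ≠ u := hn.ne'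
    have hnq : n ∈ q.support := by
      rcases List.mem_cons.mp hmem with h' | h'
      · exact absurd h' hnu
      · exact h'
    have hq : q.IsPath := hp.of_cons
    have hu_not : u ∉ q.support := ((SimpleGraph.Walk.cons_isPath_iff h q).mp hp).2
    have hqt : (q.takeUntil n hnq).IsPath := hq.takeUntil hnq
    have hw1 : (SimpleGraph.Walk.cons h (q.takeUntil n hnq)).IsPath := by
      rw [SimpleGraph.Walk.cons_isPath_iff]
      exact ⟨hqt, fun hc => hu_not (SimpleGraph.Walk.support_takeUntil_subset _ hnq hc)⟩
    have hw2 : (SimpleGraph.Walk.cons hn .nil).IsPath := by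
      simp [SimpleGraph.Walk.cons_isPath_iff, hnu.symm]
    have heq := (ht.existsUnique_path u n).unique hw1 hw2
    have hL := congrArg SimpleGraph.Walk.length heq
    simp only [SimpleGraph.Walk.length_cons, SimpleGraph.Walk.length_nil] at hL
    have h0 : (q.takeUntil n hnq).length = 0 := by omega
    exact hnc (SimpleGraph.Walk.eq_of_length_eq_zero h0).symm

lemma aux_no_triangle (ht : H.IsTree) {x y z : W} (h1 : H.Adj x y) (h2 : H.Adj y z)
    (h3 : H.Adj x z) : False := by
  have hw1 : (SimpleGraph.Walk.cons h3 .nil).IsPath := by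
    simp [SimpleGraph.Walk.cons_isPath_iff, h3.ne]
  have hw2 : (SimpleGraph.Walk.cons h1 (SimpleGraph.Walk.cons h2 .nil)).IsPath := by
    simp [SimpleGraph.Walk.cons_isPath_iff, h1.ne, h2.ne, h3.ne]
  have heq := (ht.existsUnique_path x z).unique hw1 hw2
  have hL := congrArg SimpleGraph.Walk.length heq
  simp [SimpleGraph.Walk.length_cons] at hL

lemma aux_no_far_bigs (ht : H.IsTree) (hd : ∀ u v : W, H.dist u v ≤ 3)
    {x y : W} (hxy : x ≠ y) (hnadj : ¬ H.Adj x y)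
    (hx : ∃ a b, a ≠ b ∧ H.Adj x a ∧ H.Adj x b)
    (hy : ∃ a b, a ≠ b ∧ H.Adj y a ∧ H.Adj y b) : False := by
  obtain ⟨p, hp0⟩ := (ht.existsUnique_path x y)
  have hp : p.IsPath := hp0.1
  have hlen0 : p.length ≠ 0 := fun h => hxy (SimpleGraph.Walk.eq_of_length_eq_zero h)
  have hlen1 : p.length ≠ 1 := fun h => hnadj (SimpleGraph.Walk.adj_of_length_eq_one h)
  obtain ⟨a, b, hab, ha, hb⟩ := hx
  obtain ⟨nx, hnx, hnxp⟩ := aux_offpath ht p hp hlen0 hab ha hb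
  obtain ⟨a', b', hab', ha', hb'⟩ := hy
  obtain ⟨ny, hny, hnyp'⟩ :=
    aux_offpath ht p.reverse (hp.reverse) (by simpa using hlen0) hab' ha' hb'
  have hnyp : ny ∉ p.support := fun hc =>
    hnyp' (by simpa [SimpleGraph.Walk.support_reverse] using hc)
  have hnxny : nx ≠ ny := by
    rintro rfl
    have hcp : (p.concat hny).IsPath := by
      rw [← SimpleGraph.Walk.isPath_reverse_iff, SimpleGraph.Walk.reverse_concat,
        SimpleGraph.Walk.cons_isPath_iff]
      exact ⟨hp.reverse, fun hc => hnyp (by simpa [SimpleGraph.Walk.support_reverse] using hc)⟩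
    have hw2 : (SimpleGraph.Walk.cons hnx .nil).IsPath := by
      simp [SimpleGraph.Walk.cons_isPath_iff, hnx.ne]
    have heq := (ht.existsUnique_path x nx).unique hcp hw2
    have hL := congrArg SimpleGraph.Walk.length heq
    simp only [SimpleGraph.Walk.length_concat, SimpleGraph.Walk.length_cons, SimpleGraph.Walk.length_nil] at hL
    omega
  have hcp : (p.concat hny).IsPath := by
    rw [← SimpleGraph.Walk.isPath_reverse_iff, SimpleGraph.Walk.reverse_concat,
      SimpleGraph.Walk.cons_isPath_iff]
    exact ⟨hp.reverse, fun hc => hnyp (by simpa [SimpleGraph.Walk.support_reverse] using hc)⟩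
  have hP : (SimpleGraph.Walk.cons hnx.symm (p.concat hny)).IsPath := by
    rw [SimpleGraph.Walk.cons_isPath_iff]
    refine ⟨hcp, fun hc => ?_⟩
    rw [SimpleGraph.Walk.support_concat, List.mem_append] at hc
    rcases hc with hc | hc
    · exact hnxp hc
    · simp at hc; exact hnxny hc
  have hreach : H.Reachable nx ny := ht.isConnected.preconnected nx ny
  obtain ⟨w, hwl⟩ := hreach.exists_walk_length_eq_dist
  have hw3 : w.bypass.length ≤ 3 :=
    le_trans (SimpleGraph.Walk.length_bypass_le w) (le_of_eq hwl |>.trans (hd nx ny))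
  have heq := (ht.existsUnique_path nx ny).unique (SimpleGraph.Walk.bypass_isPath w) hP
  have hL := congrArg SimpleGraph.Walk.length heq
  simp only [SimpleGraph.Walk.length_cons, SimpleGraph.Walk.length_concat] at hL
  omega

lemma aux_three_bigs (ht : H.IsTree) (hd : ∀ u v : W, H.dist u v ≤ 3)
    {x y z : W} (hxy : x ≠ y) (hxz : x ≠ z) (hyz : y ≠ z)
    (hx : ∃ a b, a ≠ b ∧ H.Adj x a ∧ H.Adj x b)
    (hy : ∃ a b, a ≠ b ∧ H.Adj y a ∧ H.Adj y b)
    (hz : ∃ a b, a ≠ b ∧ H.Adj z a ∧ H.Adj z b) : False := by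
  by_cases h1 : H.Adj x y
  · by_cases h2 : H.Adj y z
    · by_cases h3 : H.Adj x z
      · exact aux_no_triangle ht h1 h2 h3
      · exact aux_no_far_bigs ht hd hxz h3 hx hz
    · exact aux_no_far_bigs ht hd hyz h2 hy hz
  · exact aux_no_far_bigs ht hd hxy h1 hx hy

lemma aux_two_bigs_adj (ht : H.IsTree) {x y : W} (hxy : x ≠ y)
    (hx : ∃ a b, a ≠ b ∧ H.Adj x a ∧ H.Adj x b)
    (hall : ∀ z, (∃ a b, a ≠ b ∧ H.Adj z a ∧ H.Adj z b) → z = x ∨ z = y) :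
    H.Adj x y := by
  obtain ⟨p, hp, -⟩ := ht.existsUnique_path x y
  cases p with
  | nil => exact absurd rfl hxy
  | @cons _ c _ h q =>
    cases q with
    | nil => exact h
    | @cons _ c₂ _ h' r =>
      exfalso
      have hpath := hp
      rw [SimpleGraph.Walk.cons_isPath_iff] at hpath
      obtain ⟨hq, hxq⟩ := hpath
      rw [SimpleGraph.Walk.cons_isPath_iff] at hq
      obtain ⟨hr, hcr⟩ := hq
      have hxc2 : x ≠ c₂ := by
        intro hh
        subst hh
        exact hxq (by
          rw [SimpleGraph.Walk.support_cons]
          exact List.mem_cons_of_mem _ r.start_mem_support)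
      have hcy : c ≠ y := by
        intro hh
        subst hh
        exact hcr r.end_mem_support
      have hbig : ∃ a b, a ≠ b ∧ H.Adj c a ∧ H.Adj c b := ⟨x, c₂, hxc2, h.symm, h'⟩
      rcases hall c hbig with hh | hh
      · exact h.ne' hh
      · exact hcy hh

lemma aux_ncard_filter {α : Type*} [Fintype α] (p : α → Prop) [DecidablePred p] :
    {x | p x}.ncard = (Finset.univ.filter p).card := by
  rw [← Set.ncard_coe_finset]
  congr 1
  ext x
  simp

end AuxTree

/-- Let `k ≥ 3` be odd and `G` a finite `k`-regular graph of girth at least 5 whose edge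
set is partitioned into trees of diameter at most 3 with every vertex belonging to at
most `(k+1)/2` of the trees. Then `G` contains a perfect matching. -/
theorem stmt_13 {V ι : Type*} [Fintype V] [Fintype ι]
    (G : SimpleGraph V) [DecidableRel G.Adj]
    (k : ℕ) (hk3 : 3 ≤ k) (hodd : Odd k)
    (hreg : G.IsRegularOfDegree k)
    (hgirth : 5 ≤ G.egirth)
    (T : ι → G.Subgraph)
    (htree : ∀ i, (T i).coe.IsTree)
    (hdiam : ∀ i, ∀ x y : (T i).verts, (T i).coe.dist x y ≤ 3)
    (hpart : ∀ e ∈ G.edgeSet, ∃! i : ι, e ∈ (T i).edgeSet)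
    (hmem : ∀ v : V, {i : ι | v ∈ (T i).support}.ncard ≤ (k + 1) / 2) :
    ∃ M : G.Subgraph, M.IsPerfectMatching := by
  classical
  rcases isEmpty_or_nonempty V with hV | hV
  · refine ⟨⊤, SimpleGraph.Subgraph.isPerfectMatching_iff.mpr fun v => isEmptyElim v⟩
  -- nonempty ι
  have hιne : Nonempty ι := by
    obtain ⟨v⟩ := hV
    have hdegv : 0 < G.degree v := by rw [hreg v]; omega
    obtain ⟨w, hw⟩ := (SimpleGraph.degree_pos_iff_exists_adj (G := G) v).mp hdegv
    obtain ⟨i, -, -⟩ := hpart s(v, w) (G.mem_edgeSet.mpr hw)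
    exact ⟨i⟩
  -- index of an edge
  set idx : Sym2 V → ι := fun e =>
    if h : e ∈ G.edgeSet then (hpart e h).choose else Classical.arbitrary ι with hidxdef
  have hidx1 : ∀ e, ∀ h : e ∈ G.edgeSet, e ∈ (T (idx e)).edgeSet := by
    intro e h
    simp only [hidxdef, dif_pos h]
    exact (hpart e h).choose_spec.1
  have hidx2 : ∀ e, ∀ _ : e ∈ G.edgeSet, ∀ i, e ∈ (T i).edgeSet → idx e = i := by
    intro e h i hi
    simp only [hidxdef, dif_pos h]
    exact ((hpart e h).choose_spec.2 i hi).symm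
  -- local degree
  set d : V → ι → ℕ := fun v i => ((T i).neighborSet v).ncard with hddef
  have hd_filter : ∀ v i, d v i = (Finset.univ.filter fun w => (T i).Adj v w).card := by
    intro v i
    rw [hddef]
    exact aux_ncard_filter _
  have hsupp_iff : ∀ v i, v ∈ (T i).support ↔ 1 ≤ d v i := by
    intro v i
    rw [hddef]
    simp only [SimpleGraph.Subgraph.mem_support]
    rw [Nat.one_le_iff_ne_zero, Ne, Set.ncard_eq_zero (Set.toFinite _)]
    constructor
    · rintro ⟨w, hw⟩ h
      exact absurd (h ▸ hw : w ∈ (∅ : Set V)) (Set.notMem_empty w)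
    · intro h
      rcases Set.eq_empty_or_nonempty ((T i).neighborSet v) with he | ⟨w, hw⟩
      · exact absurd he h
      · exact ⟨w, hw⟩
  -- degree sum at each vertex
  have hdeg : ∀ v, ∑ i : ι, d v i = k := by
    intro v
    have hk : (G.neighborFinset v).card = k := by
      rw [G.card_neighborFinset_eq_degree]; exact hreg v
    have hfib : ∀ i : ι,
        ((G.neighborFinset v).filter fun w => idx s(v, w) = i).card = d v i := by
      intro i
      rw [hd_filter]
      congr 1
      ext w
      simp only [Finset.mem_filter, SimpleGraph.mem_neighborFinset, Finset.mem_univ, true_and]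
      constructor
      · rintro ⟨hadj, hidx⟩
        have := hidx1 s(v, w) (G.mem_edgeSet.mpr hadj)
        rw [hidx] at this
        exact SimpleGraph.Subgraph.mem_edgeSet.mp this
      · intro hadj
        have hG : G.Adj v w := (T i).adj_sub hadj
        exact ⟨hG, hidx2 s(v, w) (G.mem_edgeSet.mpr hG) i
          (SimpleGraph.Subgraph.mem_edgeSet.mpr hadj)⟩
    calc ∑ i : ι, d v i
        = ∑ i : ι, ((G.neighborFinset v).filter fun w => idx s(v, w) = i).card := by
          exact Finset.sum_congr rfl fun i _ => (hfib i).symm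
      _ = (G.neighborFinset v).card :=
          (Finset.card_eq_sum_card_fiberwise fun x _ => Finset.mem_univ _).symm
      _ = k := hk
  -- finsets
  set SvF : V → Finset ι := fun v => Finset.univ.filter fun i => v ∈ (T i).support with hSvF
  set SuF : ι → Finset V := fun i => Finset.univ.filter fun v => v ∈ (T i).support with hSuF
  set BvF : V → Finset ι := fun v => Finset.univ.filter fun i => 2 ≤ d v i with hBvF
  set BtF : ι → Finset V := fun i => Finset.univ.filter fun v => 2 ≤ d v i with hBtF
  have hSv_card : ∀ v, (SvF v).card ≤ (k + 1) / 2 := by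
    intro v
    have := hmem v
    rwa [aux_ncard_filter] at this
  -- every vertex is big somewhere
  have hbigex : ∀ v, ∃ i, 2 ≤ d v i := by
    intro v
    by_contra hcon
    push_neg at hcon
    have hzero : ∀ i, i ∉ SvF v → d v i = 0 := by
      intro i hni
      simp only [hSvF, Finset.mem_filter, Finset.mem_univ, true_and] at hni
      by_contra h0
      exact hni ((hsupp_iff v i).mpr (by omega))
    have h1 : ∑ i : ι, d v i = ∑ i ∈ SvF v, d v i :=
      (Finset.sum_subset (Finset.subset_univ _) fun i _ hni => hzero i hni).symm
    have h2 : ∑ i ∈ SvF v, d v i ≤ (SvF v).card * 1 := by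
      refine Finset.sum_le_card_nsmul _ _ _ ?_
      intro i _
      have := hcon i
      omega
    have h3 := hdeg v
    have h4 := hSv_card v
    omega
  -- double counting swap
  have hswap : ∀ P : V → ι → Prop,
      ∑ v : V, (Finset.univ.filter fun i => P v i).card
        = ∑ i : ι, (Finset.univ.filter fun v => P v i).card := by
    intro P
    simp only [Finset.card_filter]
    exact Finset.sum_comm
  -- support/verts and tree cardinality
  have htreecard : ∀ i, (SuF i).Nonempty → (SuF i).card = (T i).edgeSet.ncard + 1 := by
    intro i ⟨v0, hv0⟩
    simp only [hSuF, Finset.mem_filter, Finset.mem_univ, true_and] at hv0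
    have hv0v : v0 ∈ (T i).verts := (T i).support_subset_verts hv0
    have hsv : (T i).support = (T i).verts := by
      refine Set.Subset.antisymm (T i).support_subset_verts ?_
      intro w hw
      rcases eq_or_ne w v0 with rfl | hne
      · exact hv0
      · have hreach : (T i).coe.Reachable ⟨w, hw⟩ ⟨v0, hv0v⟩ :=
          (htree i).isConnected.preconnected _ _
        have hne' : (⟨w, hw⟩ : ((T i).verts : Set V)) ≠ ⟨v0, hv0v⟩ :=
          fun h => hne (congrArg Subtype.val h)
        obtain ⟨p⟩ := hreach
        cases p with
        | nil => exact absurd rfl hne'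
        | @cons _ u _ h q =>
          exact ⟨u.1, (SimpleGraph.Subgraph.coe_adj _ _ _).mp h⟩
    -- cards
    haveI : Fintype ((T i).verts : Set V) := Set.Finite.fintype (Set.toFinite _)
    haveI : Fintype ((T i).coe.edgeSet) := Set.Finite.fintype (Set.toFinite _)
    have hcard1 : (SuF i).card = (T i).verts.ncard := by
      rw [hSuF]
      rw [← aux_ncard_filter fun v => v ∈ (T i).support]
      have : {v | v ∈ (T i).support} = (T i).support := rfl
      rw [this, hsv]
    have htc := (htree i).card_edgeFinset
    have hcard2 : Fintype.card ((T i).verts : Set V) = (T i).verts.ncard := by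
      rw [Set.ncard_eq_toFinset_card', Set.toFinset_card]
    have hcard3 : (T i).coe.edgeFinset.card = (T i).edgeSet.ncard := by
      rw [← SimpleGraph.Subgraph.image_coe_edgeSet_coe,
        Set.ncard_image_of_injective _ (Sym2.map.injective Subtype.coe_injective),
        SimpleGraph.edgeFinset, Set.ncard_eq_toFinset_card']
    rw [hcard1, ← hcard2, ← htc, hcard3]
  -- edge count
  have hedges : ∑ i : ι, (T i).edgeSet.ncard = G.edgeFinset.card := by
    have hfib : ∀ i : ι,
        (G.edgeFinset.filter fun e => idx e = i).card = (T i).edgeSet.ncard := by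
      intro i
      rw [← Set.ncard_coe_finset (G.edgeFinset.filter fun e => idx e = i)]
      congr 1
      ext e
      simp only [Finset.coe_filter, SimpleGraph.mem_edgeFinset, Set.mem_setOf_eq]
      constructor
      · rintro ⟨he, hi⟩
        have := hidx1 e he
        rwa [hi] at this
      · intro he
        have heG : e ∈ G.edgeSet := (T i).edgeSet_subset he
        exact ⟨heG, hidx2 e heG i he⟩
    calc ∑ i : ι, (T i).edgeSet.ncard
        = ∑ i : ι, (G.edgeFinset.filter fun e => idx e = i).card :=
          Finset.sum_congr rfl fun i _ => (hfib i).symm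
      _ = G.edgeFinset.card :=
          (Finset.card_eq_sum_card_fiberwise fun x _ => Finset.mem_univ _).symm
  have hE2 : 2 * G.edgeFinset.card = Fintype.card V * k := by
    have := G.sum_degrees_eq_twice_card_edges
    rw [← this]
    rw [Finset.sum_congr rfl fun v _ => hreg v, Finset.sum_const, Finset.card_univ, smul_eq_mul]
  -- bridge between bigness and coe
  have hbigcoe : ∀ i v, 2 ≤ d v i → ∃ hm : v ∈ (T i).verts,
      ∃ a b : ((T i).verts : Set V), a ≠ b ∧
        (T i).coe.Adj ⟨v, hm⟩ a ∧ (T i).coe.Adj ⟨v, hm⟩ b := by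
    intro i v hv
    have hv' : 1 < ((T i).neighborSet v).ncard := hv
    obtain ⟨a, b, ha, hb, hab⟩ := (Set.one_lt_ncard_iff (Set.toFinite _)).mp hv'
    have haadj : (T i).Adj v a := ha
    have hbadj : (T i).Adj v b := hb
    refine ⟨(T i).edge_vert haadj, ⟨a, (T i).edge_vert haadj.symm⟩,
      ⟨b, (T i).edge_vert hbadj.symm⟩, ?_, ?_, ?_⟩
    · intro h
      exact hab (congrArg Subtype.val h)
    · exact haadj
    · exact hbadj
  have hcoebig : ∀ i, ∀ z : ((T i).verts : Set V),
      (∃ a b : ((T i).verts : Set V), a ≠ b ∧ (T i).coe.Adj z a ∧ (T i).coe.Adj z b) →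
        2 ≤ d z.1 i := by
    intro i z hz
    obtain ⟨a, b, hab, ha, hb⟩ := hz
    show 1 < ((T i).neighborSet z.1).ncard
    refine (Set.one_lt_ncard_iff (Set.toFinite _)).mpr ⟨a.1, b.1, ?_, ?_, ?_⟩
    · exact ha
    · exact hb
    · exact fun h => hab (Subtype.ext h)
  -- at most two big vertices per tree
  have hbt2 : ∀ i, (BtF i).card ≤ 2 := by
    intro i
    by_contra hcon
    push_neg at hcon
    obtain ⟨a, ha, b, hb, c, hc, hab, hac, hbc⟩ := Finset.two_lt_card.mp hcon
    simp only [hBtF, Finset.mem_filter, Finset.mem_univ, true_and] at ha hb hc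
    obtain ⟨hma, hba⟩ := hbigcoe i a ha
    obtain ⟨hmb, hbb⟩ := hbigcoe i b hb
    obtain ⟨hmc, hbc'⟩ := hbigcoe i c hc
    exact aux_three_bigs (htree i) (fun u v => hdiam i u v)
      (fun h => hab (congrArg Subtype.val h))
      (fun h => hac (congrArg Subtype.val h))
      (fun h => hbc (congrArg Subtype.val h)) hba hbb hbc'
  have hbt_supp : ∀ i, (BtF i).Nonempty → (SuF i).Nonempty := by
    intro i ⟨v, hv⟩
    simp only [hBtF, Finset.mem_filter, Finset.mem_univ, true_and] at hv
    refine ⟨v, ?_⟩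
    simp only [hSuF, Finset.mem_filter, Finset.mem_univ, true_and]
    exact (hsupp_iff v i).mpr (by omega)
  set Epos : Finset ι := Finset.univ.filter fun i => (SuF i).Nonempty with hEpos
  -- counting chain
  have hsum1 : ∑ v : V, (SvF v).card ≤ Fintype.card V * ((k + 1) / 2) := by
    calc ∑ v : V, (SvF v).card ≤ Finset.univ.card • ((k + 1) / 2) :=
          Finset.sum_le_card_nsmul _ _ _ fun v _ => hSv_card v
      _ = Fintype.card V * ((k + 1) / 2) := by rw [Finset.card_univ, smul_eq_mul]
  have hsum3 : ∑ i : ι, (SuF i).card = G.edgeFinset.card + Epos.card := by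
    have hz : ∀ i, i ∉ Epos → (SuF i).card = 0 := by
      intro i hi
      simp only [hEpos, Finset.mem_filter, Finset.mem_univ, true_and] at hi
      rw [Finset.card_eq_zero, ← Finset.not_nonempty_iff_eq_empty]
      exact hi
    have hz2 : ∀ i, i ∉ Epos → (T i).edgeSet.ncard = 0 := by
      intro i hi
      simp only [hEpos, Finset.mem_filter, Finset.mem_univ, true_and] at hi
      rw [Set.ncard_eq_zero (Set.toFinite _), ← Set.not_nonempty_iff_eq_empty]
      rintro ⟨e, he⟩
      induction e with
      | _ a b =>
        refine hi ⟨a, ?_⟩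
        simp only [hSuF, Finset.mem_filter, Finset.mem_univ, true_and]
        exact ⟨b, SimpleGraph.Subgraph.mem_edgeSet.mp he⟩
    calc ∑ i : ι, (SuF i).card = ∑ i ∈ Epos, (SuF i).card :=
          (Finset.sum_subset (Finset.subset_univ _) fun i _ hi => hz i hi).symm
      _ = ∑ i ∈ Epos, ((T i).edgeSet.ncard + 1) := by
          refine Finset.sum_congr rfl fun i hi => ?_
          simp only [hEpos, Finset.mem_filter, Finset.mem_univ, true_and] at hi
          exact htreecard i hi
      _ = (∑ i ∈ Epos, (T i).edgeSet.ncard) + Epos.card := by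
          rw [Finset.sum_add_distrib, Finset.sum_const, smul_eq_mul, mul_one]
      _ = (∑ i : ι, (T i).edgeSet.ncard) + Epos.card := by
          rw [Finset.sum_subset (Finset.subset_univ _) fun i _ hi => hz2 i hi]
      _ = G.edgeFinset.card + Epos.card := by rw [hedges]
  have hm' : 2 * Epos.card ≤ Fintype.card V := by
    obtain ⟨j, hj⟩ := hodd
    have hsw : ∑ v : V, (SvF v).card = ∑ i : ι, (SuF i).card := by
      simp only [hSvF, hSuF, Finset.card_filter]
      rw [Finset.sum_comm]
    have h1 : G.edgeFinset.card + Epos.card ≤ Fintype.card V * ((k + 1) / 2) := by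
      rw [← hsum3, ← hsw]
      exact hsum1
    have hk12 : (k + 1) / 2 = j + 1 := by omega
    rw [hk12] at h1
    have h2 : Fintype.card V * (j + 1) = Fintype.card V * j + Fintype.card V := by ring
    have h3 : Fintype.card V * k = 2 * (Fintype.card V * j) + Fintype.card V := by
      rw [hj]; ring
    rw [h3] at hE2
    omega
  have hchain1 : Fintype.card V ≤ ∑ v : V, (BvF v).card := by
    calc Fintype.card V = (Finset.univ : Finset V).card • 1 := by
          rw [Finset.card_univ, smul_eq_mul, mul_one]
      _ ≤ ∑ v : V, (BvF v).card := by
          refine Finset.card_nsmul_le_sum _ _ _ fun v _ => ?_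
          rw [Nat.one_le_iff_ne_zero, Ne, Finset.card_eq_zero, ← Ne,
            ← Finset.nonempty_iff_ne_empty]
          obtain ⟨i, hi⟩ := hbigex v
          exact ⟨i, by simp only [hBvF, Finset.mem_filter, Finset.mem_univ, true_and]; exact hi⟩
  have hbt_zero : ∀ i, i ∉ Epos → (BtF i).card = 0 := by
    intro i hi
    rw [Finset.card_eq_zero, ← Finset.not_nonempty_iff_eq_empty]
    intro hne
    simp only [hEpos, Finset.mem_filter, Finset.mem_univ, true_and] at hi
    exact hi (hbt_supp i hne)
  have hchain2 : ∑ i : ι, (BtF i).card = ∑ i ∈ Epos, (BtF i).card :=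
    (Finset.sum_subset (Finset.subset_univ _) fun i _ hi => hbt_zero i hi).symm
  have hchain3 : ∑ i ∈ Epos, (BtF i).card ≤ 2 * Epos.card := by
    calc ∑ i ∈ Epos, (BtF i).card ≤ Epos.card • 2 :=
          Finset.sum_le_card_nsmul _ _ _ fun i _ => hbt2 i
      _ = 2 * Epos.card := by rw [smul_eq_mul, mul_comm]
  have hswb : ∑ v : V, (BvF v).card = ∑ i : ι, (BtF i).card := by
    simp only [hBvF, hBtF, Finset.card_filter]
    rw [Finset.sum_comm]
  have htotal : ∑ v : V, (BvF v).card ≤ Fintype.card V := by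
    rw [hswb, hchain2]
    exact le_trans hchain3 hm'
  -- each vertex is big in exactly one tree
  have hge1 : ∀ v, 1 ≤ (BvF v).card := by
    intro v
    rw [Nat.one_le_iff_ne_zero, Ne, Finset.card_eq_zero, ← Ne, ← Finset.nonempty_iff_ne_empty]
    obtain ⟨i, hi⟩ := hbigex v
    exact ⟨i, by simp only [hBvF, Finset.mem_filter, Finset.mem_univ, true_and]; exact hi⟩
  have hBv1 : ∀ v, (BvF v).card = 1 := by
    intro v
    by_contra hne
    have h2 : 2 ≤ (BvF v).card := by have := hge1 v; omega
    have hlt : ∑ _w : V, 1 < ∑ v : V, (BvF v).card :=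
      Finset.sum_lt_sum (fun w _ => hge1 w) ⟨v, Finset.mem_univ v, by omega⟩
    rw [Finset.sum_const, smul_eq_mul, mul_one, Finset.card_univ] at hlt
    omega
  have hsumBv : ∑ v : V, (BvF v).card = Fintype.card V := le_antisymm htotal hchain1
  have hEposSum : ∑ i ∈ Epos, (BtF i).card = 2 * Epos.card := by
    have h1 : ∑ i ∈ Epos, (BtF i).card = Fintype.card V := by
      rw [← hchain2, ← hswb]; exact hsumBv
    omega
  have hBt2eq : ∀ i ∈ Epos, (BtF i).card = 2 := by
    intro i hi
    by_contra hne
    have hlt : ∑ i ∈ Epos, (BtF i).card < ∑ _i ∈ Epos, 2 := by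
      refine Finset.sum_lt_sum (fun j _ => hbt2 j) ⟨i, hi, by have := hbt2 i; omega⟩
    rw [Finset.sum_const, smul_eq_mul, mul_comm] at hlt
    omega
  have hmemBtF : ∀ v i, 2 ≤ d v i → v ∈ BtF i := by
    intro v i hv
    simp only [hBtF, Finset.mem_filter, Finset.mem_univ, true_and]
    exact hv
  have huniqbig : ∀ v i i', 2 ≤ d v i → 2 ≤ d v i' → i = i' := by
    intro v i i' hi hi'
    obtain ⟨j, hj⟩ := Finset.card_eq_one.mp (hBv1 v)
    have hmi : i ∈ BvF v := by
      simp only [hBvF, Finset.mem_filter, Finset.mem_univ, true_and]; exact hi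
    have hmi' : i' ∈ BvF v := by
      simp only [hBvF, Finset.mem_filter, Finset.mem_univ, true_and]; exact hi'
    rw [hj, Finset.mem_singleton] at hmi hmi'
    rw [hmi, hmi']
  have hEpos_of_big : ∀ v i, 2 ≤ d v i → i ∈ Epos := by
    intro v i hv
    simp only [hEpos, Finset.mem_filter, Finset.mem_univ, true_and]
    refine ⟨v, ?_⟩
    simp only [hSuF, Finset.mem_filter, Finset.mem_univ, true_and]
    exact (hsupp_iff v i).mpr (by omega)
  have hpairuniq : ∀ i v w w', 2 ≤ d v i → 2 ≤ d w i → 2 ≤ d w' i → w ≠ v → w' ≠ v →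
      w = w' := by
    intro i v w w' hv hw hw' hwv hw'v
    obtain ⟨x, y, hxy, hxyeq⟩ := Finset.card_eq_two.mp (hBt2eq i (hEpos_of_big v i hv))
    have hv2 := hmemBtF v i hv
    have hw2 := hmemBtF w i hw
    have hw'2 := hmemBtF w' i hw'
    rw [hxyeq, Finset.mem_insert, Finset.mem_singleton] at hv2 hw2 hw'2
    rcases hv2 with rfl | rfl <;> rcases hw2 with rfl | rfl <;>
      rcases hw'2 with rfl | rfl <;> tauto
  have hother : ∀ v i, 2 ≤ d v i → ∃ w, w ≠ v ∧ 2 ≤ d w i := by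
    intro v i hv
    have h2 := hBt2eq i (hEpos_of_big v i hv)
    obtain ⟨w, hw, hwv⟩ := Finset.exists_mem_ne (s := BtF i) (by omega) v
    simp only [hBtF, Finset.mem_filter, Finset.mem_univ, true_and] at hw
    exact ⟨w, hwv, hw⟩
  have hadjbig : ∀ v w i, 2 ≤ d v i → 2 ≤ d w i → w ≠ v → G.Adj v w := by
    intro v w i hv hw hwv
    obtain ⟨hmv, bigv⟩ := hbigcoe i v hv
    obtain ⟨hmw, bigw⟩ := hbigcoe i w hw
    have hall : ∀ z : ((T i).verts : Set V),
        (∃ a b : ((T i).verts : Set V), a ≠ b ∧ (T i).coe.Adj z a ∧ (T i).coe.Adj z b) →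
          z = ⟨v, hmv⟩ ∨ z = ⟨w, hmw⟩ := by
      intro z hz
      have hz2 := hcoebig i z hz
      rcases eq_or_ne z.1 v with h | h
      · exact Or.inl (Subtype.ext h)
      · exact Or.inr (Subtype.ext (hpairuniq i v z.1 w hv hz2 hw h hwv))
    have hxy : (⟨v, hmv⟩ : ((T i).verts : Set V)) ≠ ⟨w, hmw⟩ :=
      fun h => hwv (congrArg Subtype.val h).symm
    have hadj := aux_two_bigs_adj (htree i) hxy bigv hall
    exact (T i).adj_sub ((SimpleGraph.Subgraph.coe_adj _ _ _).mp hadj)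
  -- the matching
  have hexu : ∀ v, ∃! w, ∃ i, 2 ≤ d v i ∧ 2 ≤ d w i ∧ v ≠ w := by
    intro v
    obtain ⟨i, hi⟩ := hbigex v
    obtain ⟨w, hwv, hwi⟩ := hother v i hi
    refine ⟨w, ⟨i, hi, hwi, hwv.symm⟩, ?_⟩
    rintro w' ⟨i', hvi', hwi', hvw'⟩
    have hii : i' = i := huniqbig v i' i hvi' hi
    subst hii
    exact hpairuniq i' v w' w hvi' hwi' hwi hvw'.symm hwv
  refine ⟨{ verts := Set.univ
            Adj := fun a b => ∃ i, 2 ≤ d a i ∧ 2 ≤ d b i ∧ a ≠ b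
            adj_sub := ?_
            edge_vert := fun _ => Set.mem_univ _
            symm := ?_ }, ?_⟩
  · rintro a b ⟨i, h1, h2, hne⟩
    exact hadjbig a b i h1 h2 hne.symm
  · constructor
    rintro a b ⟨i, h1, h2, hne⟩
    exact ⟨i, h2, h1, hne.symm⟩
  · rw [SimpleGraph.Subgraph.isPerfectMatching_iff]
    exact hexu
end

section
/- For every n ≥ 2, the chromatic number of the shift graph S_n is at least ⌈log₂ n⌉; more precisely, if S_n is properly colored with c colors then n ≤ 2^c. -/
/-- The shift graph `S_n`: vertices are pairs `(i,j)` with `i < j ≤ n`, and `(i,j)` is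
adjacent to `(k,ℓ)` iff `j = k` or `ℓ = i`. -/
def shiftGraph (n : ℕ) : SimpleGraph {p : Fin n × Fin n // p.1 < p.2} :=
  SimpleGraph.fromRel fun p q => p.1.2 = q.1.1

lemma shift_key (n : ℕ) (c : ℕ) (φ : (shiftGraph n).Coloring (Fin c)) : n ≤ 2 ^ c := by
  classical
  let f : Fin n → Finset (Fin c) := fun i =>
    Finset.univ.filter (fun col => ∃ j : Fin n, ∃ h : i < j, φ ⟨(i, j), h⟩ = col)
  have hinj : Function.Injective f := by
    intro i j hij
    by_contra hne
    wlog hlt : i < j generalizing i j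
    · exact this (i := j) (j := i) hij.symm (Ne.symm hne) (lt_of_le_of_ne (not_lt.mp hlt) (Ne.symm hne))
    have hmem : φ ⟨(i, j), hlt⟩ ∈ f i := by
      simp only [f, Finset.mem_filter, Finset.mem_univ, true_and]
      exact ⟨j, hlt, rfl⟩
    rw [hij] at hmem
    simp only [f, Finset.mem_filter, Finset.mem_univ, true_and] at hmem
    obtain ⟨ℓ, hℓ, hcol⟩ := hmem
    have hadj : (shiftGraph n).Adj ⟨(i, j), hlt⟩ ⟨(j, ℓ), hℓ⟩ := by
      refine ⟨?_, Or.inl rfl⟩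
      intro h
      have : i = j := congrArg (fun v => (Subtype.val v).1) h
      exact absurd this hlt.ne
    exact φ.valid hadj hcol.symm
  calc n = Fintype.card (Fin n) := (Fintype.card_fin n).symm
    _ ≤ Fintype.card (Finset (Fin c)) := Fintype.card_le_of_injective f hinj
    _ = 2 ^ c := by simp

/-- For every `n ≥ 2`, the chromatic number of the shift graph `S_n` is at least
`⌈log₂ n⌉`; more precisely, if `S_n` is properly colored with `c` colors then `n ≤ 2^c`. -/
theorem stmt_17 (n : ℕ) (hn : 2 ≤ n) :
    (Nat.clog 2 n : ℕ∞) ≤ (shiftGraph n).chromaticNumber ∧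
    ∀ (c : ℕ), (shiftGraph n).Coloring (Fin c) → n ≤ 2 ^ c := by
  refine ⟨?_, fun c φ => shift_key n c φ⟩
  rw [SimpleGraph.chromaticNumber]
  refine le_iInf₂ fun m hm => ?_
  have hφ : Nonempty ((shiftGraph n).Coloring (Fin m)) := hm
  have := shift_key n m hφ.some
  exact_mod_cast (Nat.clog_le_iff_le_pow (by norm_num)).mpr this
end
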